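/- Let A be a brace of cardinality p^n with p prime and p > n + 1. Then pA is a subbrace of A which is strongly nilpotent of nilpotency index at most p − 1. -/

import Mathlib

/-- A left brace: an abelian group `(A,+)` together with a group operation `circ`
(whose identity is `0`) satisfying `a ∘ (b + c) + a = a ∘ b + a ∘ c`. -/
structure LeftBrace (A : Type*) [AddCommGroup A] where
  circ : A → A → A
  inv : A → A
  circ_assoc : ∀ a b c, circ (circ a b) c = circ a (circ b c)
  circ_zero : ∀ a, circ a 0 = a
  zero_circ : ∀ a, circ 0 a = a
  inv_circ : ∀ a, circ (inv a) a = 0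
  compat : ∀ a b c, circ a (b + c) + a = circ a b + circ a c

namespace LeftBrace

variable {A : Type*} [AddCommGroup A]

/-- The star operation `a * b = a ∘ b - a - b`. -/
def star (B : LeftBrace A) (a b : A) : A := B.circ a b - a - b

/-- `circPow B a n` is the product `a ∘ a ∘ ⋯ ∘ a` of `n` copies of `a`. -/
def circPow (B : LeftBrace A) (a : A) : ℕ → A
  | 0 => 0
  | n + 1 => B.circ a (B.circPow a n)

end LeftBrace

/-- StarProdIn B S k x : x is a product (under *, any bracketing) of exactly k
elements of the set S. -/
inductive StarProdIn {A : Type*} [AddCommGroup A] (B : LeftBrace A) (S : Set A) : ℕ → A → Prop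
  | base {x : A} : x ∈ S → StarProdIn B S 1 x
  | mul {i j : ℕ} {x y : A} : StarProdIn B S i x → StarProdIn B S j y →
      StarProdIn B S (i + j) (B.star x y)

namespace Stmt6Aux

variable {A : Type*} [AddCommGroup A]

/-- The lambda map of a left brace: `lam B x c = x ∘ c - x`. -/
def lam (B : LeftBrace A) (x c : A) : A := B.circ x c - x

lemma lam_add (B : LeftBrace A) (x b c : A) :
    lam B x (b + c) = lam B x b + lam B x c := by
  have h := B.compat x b c
  unfold lam
  have : B.circ x (b + c) = B.circ x b + B.circ x c - x := by
    rw [← h]; abel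
  rw [this]; abel

/-- `lam B x` as an additive monoid hom. -/
def lamHom (B : LeftBrace A) (x : A) : A →+ A :=
  AddMonoidHom.mk' (lam B x) (lam_add B x)

@[simp] lemma lamHom_apply (B : LeftBrace A) (x c : A) : lamHom B x c = lam B x c := rfl

lemma lam_zero_right (B : LeftBrace A) (x : A) : lam B x 0 = 0 := by
  unfold lam; rw [B.circ_zero]; abel

lemma lam_zero_left (B : LeftBrace A) (c : A) : lam B 0 c = c := by
  unfold lam; rw [B.zero_circ]; abel

lemma lam_neg (B : LeftBrace A) (x c : A) : lam B x (-c) = -lam B x c :=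
  (lamHom B x).map_neg c

lemma lam_sub (B : LeftBrace A) (x b c : A) : lam B x (b - c) = lam B x b - lam B x c :=
  (lamHom B x).map_sub b c

lemma lam_nsmul (B : LeftBrace A) (x : A) (k : ℕ) (c : A) :
    lam B x (k • c) = k • lam B x c :=
  (lamHom B x).map_nsmul k c

lemma circ_eq (B : LeftBrace A) (x c : A) : B.circ x c = x + lam B x c := by
  unfold lam; abel

lemma lam_circ (B : LeftBrace A) (x y c : A) :
    lam B (B.circ x y) c = lam B x (lam B y c) := by
  have h := lam_sub B x (B.circ y c) y
  unfold lam at h ⊢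
  rw [B.circ_assoc]
  rw [h]
  abel

/-- inv is a right inverse as well. -/
lemma circ_inv_right (B : LeftBrace A) (x : A) : B.circ x (B.inv x) = 0 := by
  have h1 : B.circ (B.inv (B.inv x)) (B.inv x) = 0 := B.inv_circ _
  have hx : x = B.inv (B.inv x) := by
    calc x = B.circ 0 x := (B.zero_circ x).symm
    _ = B.circ (B.circ (B.inv (B.inv x)) (B.inv x)) x := by rw [h1]
    _ = B.circ (B.inv (B.inv x)) (B.circ (B.inv x) x) := B.circ_assoc _ _ _
    _ = B.circ (B.inv (B.inv x)) 0 := by rw [B.inv_circ]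
    _ = B.inv (B.inv x) := B.circ_zero _
  rw [← hx] at h1
  exact h1

lemma lam_lam_inv (B : LeftBrace A) (x c : A) : lam B x (lam B (B.inv x) c) = c := by
  rw [← lam_circ, circ_inv_right, lam_zero_left]

lemma lam_inv_lam (B : LeftBrace A) (x c : A) : lam B (B.inv x) (lam B x c) = c := by
  rw [← lam_circ, B.inv_circ, lam_zero_left]

lemma star_eq (B : LeftBrace A) (x c : A) : B.star x c = lam B x c - c := by
  unfold LeftBrace.star lam; abel

lemma star_add_right (B : LeftBrace A) (x b c : A) :
    B.star x (b + c) = B.star x b + B.star x c := by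
  rw [star_eq, star_eq, star_eq, lam_add]; abel

lemma star_zero_right (B : LeftBrace A) (x : A) : B.star x 0 = 0 := by
  rw [star_eq, lam_zero_right]; abel

lemma star_neg_right (B : LeftBrace A) (x c : A) : B.star x (-c) = -B.star x c := by
  rw [star_eq, star_eq, lam_neg]; abel

lemma star_nsmul_right (B : LeftBrace A) (x : A) (k : ℕ) (c : A) :
    B.star x (k • c) = k • B.star x c := by
  rw [star_eq, star_eq, lam_nsmul, smul_sub]

lemma star_zero_left (B : LeftBrace A) (c : A) : B.star 0 c = 0 := by
  rw [star_eq, lam_zero_left]; abel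

/-- Decomposition: for any a b c,
`star a c = lam b (star z c) + star b c` where `z = lam (inv b) (a - b)`. -/
lemma star_decomp (B : LeftBrace A) (a b c : A) :
    B.star a c = lam B b (B.star (lam B (B.inv b) (a - b)) c) + B.star b c := by
  set z := lam B (B.inv b) (a - b) with hz
  have hbz : B.circ b z = a := by
    rw [circ_eq, hz, lam_lam_inv]; abel
  have h1 : lam B a c = lam B b (lam B z c) := by rw [← hbz, lam_circ]
  rw [star_eq, star_eq, star_eq, h1, lam_sub]
  abel

end Stmt6Aux

namespace Stmt6Aux

variable {A : Type*} [AddCommGroup A]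

/-- Successor step for the socle-type series. -/
def Zsucc (B : LeftBrace A) (N : AddSubgroup A) : AddSubgroup A where
  carrier := {m | ∀ x, B.star x m ∈ N}
  add_mem' := by
    intro a b ha hb
    intro x
    rw [star_add_right]
    exact N.add_mem (ha x) (hb x)
  zero_mem' := by
    intro x
    rw [star_zero_right]
    exact N.zero_mem
  neg_mem' := by
    intro a ha x
    rw [star_neg_right]
    exact N.neg_mem (ha x)

/-- The socle-type (upper) series of a left brace. -/
def Zs (B : LeftBrace A) : ℕ → AddSubgroup A
  | 0 => ⊥
  | (j + 1) => Zsucc B (Zs B j)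

lemma mem_Zsucc (B : LeftBrace A) {N : AddSubgroup A} {m : A} :
    m ∈ Zsucc B N ↔ ∀ x, B.star x m ∈ N := Iff.rfl

lemma Zs_mono_succ (B : LeftBrace A) : ∀ j, Zs B j ≤ Zs B (j + 1) := by
  intro j
  induction j with
  | zero => exact bot_le
  | succ j ih =>
    intro m hm x
    exact ih (hm x)

lemma Zs_mono (B : LeftBrace A) {j k : ℕ} (h : j ≤ k) : Zs B j ≤ Zs B k := by
  induction k with
  | zero => simp_all
  | succ k ih =>
    rcases Nat.lt_or_ge j (k+1) with h' | h'
    · exact le_trans (ih (Nat.lt_succ_iff.mp h')) (Zs_mono_succ B k)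
    · have : j = k + 1 := le_antisymm h h'
      subst this; exact le_rfl

lemma star_mem_Zs (B : LeftBrace A) {t : ℕ} {m : A} (hm : m ∈ Zs B t) (x : A) :
    B.star x m ∈ Zs B (t - 1) := by
  cases t with
  | zero =>
    have : m = 0 := by simpa [Zs] using hm
    subst this
    rw [star_zero_right]
    exact hm
  | succ t => exact hm x

lemma lam_mem_Zs (B : LeftBrace A) {t : ℕ} {m : A} (hm : m ∈ Zs B t) (x : A) :
    lam B x m ∈ Zs B t := by
  have h1 : lam B x m = B.star x m + m := by rw [star_eq]; abel
  rw [h1]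
  exact (Zs B t).add_mem (Zs_mono B (Nat.sub_le t 1) (star_mem_Zs B hm x)) hm

/-- Iterated star with a fixed left argument. -/
def sIter (B : LeftBrace A) (u : A) : ℕ → A → A
  | 0, c => c
  | (m + 1), c => B.star u (sIter B u m c)

lemma sIter_mem_Zs (B : LeftBrace A) (u : A) {t : ℕ} {c : A} (hc : c ∈ Zs B t) (m : ℕ) :
    sIter B u m c ∈ Zs B (t - m) := by
  induction m with
  | zero => simpa [sIter] using hc
  | succ m ih =>
    have := star_mem_Zs B ih u
    have h2 : t - m - 1 = t - (m+1) := by omega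
    rw [h2] at this
    exact this

end Stmt6Aux

namespace Stmt6Aux

variable {A : Type*} [AddCommGroup A]

/-- Generators of the double filtration: `p^i`-multiples of elements of `Zs t`,
with `i ≥ k` and weight `i + (n - t) ≥ m`. -/
def Pgen (B : LeftBrace A) (p n k m : ℕ) : Set A :=
  {z | ∃ i t c, t ≤ n ∧ c ∈ Zs B t ∧ k ≤ i ∧ m + t ≤ i + n ∧ z = p ^ i • c}

/-- The double filtration subgroups. -/
def Pset (B : LeftBrace A) (p n k m : ℕ) : AddSubgroup A :=
  AddSubgroup.closure (Pgen B p n k m)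

lemma mem_Pset_of (B : LeftBrace A) (p n : ℕ) {k m i t : ℕ} {c : A}
    (ht : t ≤ n) (hc : c ∈ Zs B t) (hk : k ≤ i) (hm : m + t ≤ i + n) :
    p ^ i • c ∈ Pset B p n k m :=
  AddSubgroup.subset_closure ⟨i, t, c, ht, hc, hk, hm, rfl⟩

lemma Pset_mono (B : LeftBrace A) (p n : ℕ) {k m k' m' : ℕ} (hk : k ≤ k') (hm : m ≤ m') :
    Pset B p n k' m' ≤ Pset B p n k m := by
  apply AddSubgroup.closure_le _ |>.mpr
  rintro z ⟨i, t, c, ht, hc, hki, hmi, rfl⟩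
  exact mem_Pset_of B p n ht hc (le_trans hk hki) (by omega)

lemma Pset_lam (B : LeftBrace A) (p n : ℕ) {k m : ℕ} (x : A) {z : A}
    (hz : z ∈ Pset B p n k m) : lam B x z ∈ Pset B p n k m := by
  have : Pset B p n k m ≤ (Pset B p n k m).comap (lamHom B x) := by
    apply AddSubgroup.closure_le _ |>.mpr
    rintro w ⟨i, t, c, ht, hc, hki, hmi, rfl⟩
    have : lamHom B x (p ^ i • c) = p ^ i • lam B x c := by
      simp [lam_nsmul]
    simp only [SetLike.mem_coe, AddSubgroup.mem_comap, this]
    exact mem_Pset_of B p n ht (lam_mem_Zs B hc x) hki hmi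
  exact this hz

lemma Pset_smul_p (B : LeftBrace A) (p n : ℕ) {k m : ℕ} {z : A}
    (hz : z ∈ Pset B p n k m) : p • z ∈ Pset B p n (k + 1) (m + 1) := by
  have : Pset B p n k m ≤ (Pset B p n (k+1) (m+1)).comap
      (AddMonoidHom.mk' (fun y : A => p • y) (fun a b => smul_add p a b)) := by
    apply AddSubgroup.closure_le _ |>.mpr
    rintro w ⟨i, t, c, ht, hc, hki, hmi, rfl⟩
    simp only [SetLike.mem_coe, AddSubgroup.mem_comap]
    have : (AddMonoidHom.mk' (fun y : A => p • y) (fun a b => smul_add p a b)) (p ^ i • c)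
        = p ^ (i + 1) • c := by
      simp [smul_smul, pow_succ, mul_comm]
    rw [this]
    exact mem_Pset_of B p n ht hc (by omega) (by omega)
  exact this hz

lemma Pset_dvd (B : LeftBrace A) (p n : ℕ) {k m : ℕ} {z : A}
    (hz : z ∈ Pset B p n k m) : ∃ y : A, z = p ^ k • y := by
  have : Pset B p n k m ≤
      (AddMonoidHom.mk' (fun y : A => p ^ k • y) (fun a b => smul_add _ a b)).range := by
    apply AddSubgroup.closure_le _ |>.mpr
    rintro w ⟨i, t, c, ht, hc, hki, hmi, rfl⟩
    refine ⟨p ^ (i - k) • c, ?_⟩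
    simp only [AddMonoidHom.mk'_apply, smul_smul]
    rw [← pow_add]
    have hik : k + (i - k) = i := by omega
    rw [hik]
  obtain ⟨y, hy⟩ := this hz
  exact ⟨y, hy.symm⟩

end Stmt6Aux

namespace Stmt6Aux

variable {A : Type*} [AddCommGroup A]

/-- star with fixed left argument, as additive hom. -/
def starHom (B : LeftBrace A) (u : A) : A →+ A :=
  AddMonoidHom.mk' (B.star u) (star_add_right B u)

@[simp] lemma starHom_apply (B : LeftBrace A) (u c : A) : starHom B u c = B.star u c := rfl

lemma Pset_smul_pow (B : LeftBrace A) (p n : ℕ) {k m : ℕ} (j : ℕ) {z : A}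
    (hz : z ∈ Pset B p n k m) : p ^ j • z ∈ Pset B p n (k + j) (m + j) := by
  induction j with
  | zero => simpa using hz
  | succ j ih =>
    have := Pset_smul_p B p n ih
    have hpow : p • p ^ j • z = p ^ (j+1) • z := by
      rw [smul_smul, ← pow_succ']
    rw [hpow] at this
    have e1 : k + j + 1 = k + (j + 1) := by omega
    have e2 : m + j + 1 = m + (j + 1) := by omega
    rw [e1, e2] at this
    exact this

section WithCard

variable [Fintype A]

lemma nsmul_card_zero (p n : ℕ) (hcard : Fintype.card A = p ^ n) (y : A) :
    p ^ n • y = 0 := by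
  rw [← hcard]
  exact card_nsmul_eq_zero

lemma nsmul_big_zero (p n : ℕ) (hcard : Fintype.card A = p ^ n) {K : ℕ} (hK : n ≤ K) (y : A) :
    p ^ K • y = 0 := by
  have : p ^ K • y = p ^ (K - n) • (p ^ n • y) := by
    rw [smul_smul, ← pow_add]
    have e : K - n + n = K := by omega
    rw [e]
  rw [this, nsmul_card_zero p n hcard, smul_zero]

lemma Pset_bot (B : LeftBrace A) (p n : ℕ) (hcard : Fintype.card A = p ^ n)
    {k m : ℕ} (hk : n ≤ k) {z : A} (hz : z ∈ Pset B p n k m) : z = 0 := by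
  obtain ⟨y, rfl⟩ := Pset_dvd B p n hz
  exact nsmul_big_zero p n hcard hk y

end WithCard

/-- `GoodC k N u`: star-multiplication by `u` on the left gains `p`-divisibility `k`
and weight `N+1`. -/
def GoodC (B : LeftBrace A) (p n k N : ℕ) (u : A) : Prop :=
  ∀ t, t ≤ n → ∀ c ∈ Zs B t, B.star u c ∈ Pset B p n k (N + 1 + (n - t))

lemma GoodC_mono (B : LeftBrace A) (p n : ℕ) {k N k' N' : ℕ} {u : A}
    (hk : k' ≤ k) (hN : N' ≤ N) (h : GoodC B p n k N u) : GoodC B p n k' N' u := by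
  intro t ht c hc
  exact Pset_mono B p n hk (by omega) (h t ht c hc)

lemma GoodC_zero (B : LeftBrace A) (p n k N : ℕ) : GoodC B p n k N 0 := by
  intro t ht c hc
  rw [star_zero_left]
  exact (Pset B p n k (N + 1 + (n - t))).zero_mem

/-- Left star-multiplication by a good element maps the filtration accordingly. -/
lemma GoodP (B : LeftBrace A) (p n : ℕ) {k N : ℕ} {u : A} (h : GoodC B p n k N u)
    {k' m' : ℕ} {z : A} (hz : z ∈ Pset B p n k' m') :
    B.star u z ∈ Pset B p n (k + k') (N + 1 + m') := by
  have hle : Pset B p n k' m' ≤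
      (Pset B p n (k + k') (N + 1 + m')).comap (starHom B u) := by
    apply AddSubgroup.closure_le _ |>.mpr
    rintro w ⟨i, t, c, ht, hc, hki, hmi, rfl⟩
    simp only [SetLike.mem_coe, AddSubgroup.mem_comap, starHom_apply]
    rw [star_nsmul_right]
    have h1 := Pset_smul_pow B p n i (h t ht c hc)
    exact Pset_mono B p n (by omega) (by omega) h1
  exact hle hz

/-- Iterates of left star-multiplication by a good element. -/
lemma GoodIter (B : LeftBrace A) (p n : ℕ) {k N : ℕ} {u : A} (h : GoodC B p n k N u)
    {t : ℕ} (ht : t ≤ n) {c : A} (hc : c ∈ Zs B t) (m : ℕ) :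
    sIter B u m c ∈ Pset B p n (m * k) (m * (N + 1) + (n - t)) := by
  induction m with
  | zero =>
    have : c ∈ Pset B p n 0 (0 * (N+1) + (n - t)) := by
      have := mem_Pset_of B p n (k := 0) (m := 0 * (N+1) + (n-t)) (i := 0) ht hc
        (by omega) (by omega)
      simpa using this
    simpa [sIter] using this
  | succ m ih =>
    have h2 := GoodP B p n h ih
    have e1 : k + m * k = (m + 1) * k := by ring
    have e2 : N + 1 + (m * (N + 1) + (n - t)) = (m + 1) * (N + 1) + (n - t) := by ring
    rw [e1, e2] at h2
    exact h2

end Stmt6Aux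

namespace Stmt6Aux

variable {A : Type*} [AddCommGroup A]

lemma lam_eq_add_star (B : LeftBrace A) (x w : A) : lam B x w = w + B.star x w := by
  rw [star_eq]; abel

/-- Applied binomial formula for iterated lambda. -/
lemma lam_circPow (B : LeftBrace A) (u c : A) (K : ℕ) :
    lam B (B.circPow u K) c = ∑ m ∈ Finset.range (K + 1), (K.choose m) • sIter B u m c := by
  induction K with
  | zero =>
    simp [LeftBrace.circPow, lam_zero_left, sIter]
  | succ K ih =>
    have lhs : lam B (B.circPow u (K+1)) c = lam B u (lam B (B.circPow u K) c) := by
      rw [show B.circPow u (K+1) = B.circ u (B.circPow u K) from rfl, lam_circ]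
    rw [lhs, ih, ← lamHom_apply, map_sum]
    have hterm : ∀ m, (lamHom B u) ((K.choose m) • sIter B u m c)
        = (K.choose m) • sIter B u m c + (K.choose m) • sIter B u (m+1) c := by
      intro m
      rw [lamHom_apply, lam_nsmul, lam_eq_add_star, smul_add]
      rfl
    rw [Finset.sum_congr rfl (fun m _ => hterm m), Finset.sum_add_distrib]
    -- now: ∑_{m<K+1} C(K,m)•s_m + ∑_{m<K+1} C(K,m)•s_{m+1} = ∑_{m<K+2} C(K+1,m)•s_m
    rw [Finset.sum_range_succ' (fun m => ((K+1).choose m) • sIter B u m c) (K+1)]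
    -- RHS = ∑_{m<K+1} C(K+1,m+1)•s_{m+1} + C(K+1,0)•s_0
    have e1 : ∀ m, ((K+1).choose (m+1)) • sIter B u (m+1) c
        = (K.choose m) • sIter B u (m+1) c + (K.choose (m+1)) • sIter B u (m+1) c := by
      intro m
      rw [Nat.choose_succ_succ, add_smul]
    rw [Finset.sum_congr rfl (fun m _ => e1 m), Finset.sum_add_distrib]
    have e2 : ∑ m ∈ Finset.range (K+1), (K.choose (m+1)) • sIter B u (m+1) c
        = ∑ m ∈ Finset.range K, (K.choose (m+1)) • sIter B u (m+1) c := by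
      rw [Finset.sum_range_succ, Nat.choose_succ_self, zero_smul, add_zero]
    have e3 : ∑ m ∈ Finset.range (K+1), (K.choose m) • sIter B u m c
        = ∑ m ∈ Finset.range K, (K.choose (m+1)) • sIter B u (m+1) c
          + (K.choose 0) • sIter B u 0 c := by
      rw [Finset.sum_range_succ' (fun m => (K.choose m) • sIter B u m c) K]
    rw [e2, e3]
    simp [sIter]
    abel

end Stmt6Aux

namespace Stmt6Aux

variable {A : Type*} [AddCommGroup A]

/-- Closed form for circle powers. -/
lemma circPow_eq (B : LeftBrace A) (u : A) (K : ℕ) :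
    B.circPow u K = K • u
      + ∑ j ∈ Finset.range (K + 1), (K.choose (j+2)) • sIter B u (j+1) u := by
  induction K with
  | zero =>
    simp [LeftBrace.circPow]
  | succ K ih =>
    have lhs : B.circPow u (K+1) = u + lam B u (B.circPow u K) := by
      rw [show B.circPow u (K+1) = B.circ u (B.circPow u K) from rfl, circ_eq]
    rw [lhs, ih, ← lamHom_apply, map_add, map_nsmul, map_sum]
    have h1 : (lamHom B u) u = u + sIter B u 1 u := by
      rw [lamHom_apply, lam_eq_add_star]
      rfl
    have hterm : ∀ j, (lamHom B u) ((K.choose (j+2)) • sIter B u (j+1) u)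
        = (K.choose (j+2)) • sIter B u (j+1) u + (K.choose (j+2)) • sIter B u (j+2) u := by
      intro j
      rw [lamHom_apply, lam_nsmul, lam_eq_add_star, smul_add]
      rfl
    rw [h1, Finset.sum_congr rfl (fun j _ => hterm j), Finset.sum_add_distrib]
    -- target RHS juggle
    have target : ∑ j ∈ Finset.range (K+2), ((K+1).choose (j+2)) • sIter B u (j+1) u
        = ∑ j ∈ Finset.range (K+1), (K.choose (j+2)) • sIter B u (j+2) u
          + (∑ j ∈ Finset.range (K+1), (K.choose (j+3)) • sIter B u (j+2) u
             + (K + K.choose 2) • sIter B u 1 u) := by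
      rw [Finset.sum_range_succ' (fun j => ((K+1).choose (j+2)) • sIter B u (j+1) u) (K+1)]
      have e1 : ∀ j, ((K+1).choose (j+3)) • sIter B u (j+2) u
          = (K.choose (j+2)) • sIter B u (j+2) u + (K.choose (j+3)) • sIter B u (j+2) u := by
        intro j
        rw [show (K+1).choose (j+3) = K.choose (j+2) + K.choose (j+3) from
          Nat.choose_succ_succ K (j+2), add_smul]
      have e2 : ((K+1).choose 2) • sIter B u (0+1) u = (K + K.choose 2) • sIter B u 1 u := by
        rw [show (K+1).choose 2 = K.choose 1 + K.choose 2 from Nat.choose_succ_succ K 1,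
          Nat.choose_one_right]
      rw [Finset.sum_congr rfl (fun j _ => e1 j), Finset.sum_add_distrib, e2]
      abel
    rw [target]
    have lhs2 : ∑ j ∈ Finset.range (K+1), (K.choose (j+2)) • sIter B u (j+1) u
        = ∑ j ∈ Finset.range (K+1), (K.choose (j+3)) • sIter B u (j+2) u
          + (K.choose 2) • sIter B u 1 u := by
      rw [Finset.sum_range_succ' (fun j => (K.choose (j+2)) • sIter B u (j+1) u) K]
      rw [Finset.sum_range_succ (fun j => (K.choose (j+3)) • sIter B u (j+2) u) K]
      have ez : K.choose (K+3) = 0 := Nat.choose_eq_zero_of_lt (by omega)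
      rw [ez, zero_smul, add_zero]
    rw [lhs2, smul_add, add_smul K 1 u, one_smul, add_smul K (K.choose 2) (sIter B u 1 u)]
    abel

end Stmt6Aux

namespace Stmt6Aux

variable {A : Type*} [AddCommGroup A]

/-- The "error" element in the p-th circle power: `u^{∘p} = p•u + p•(vElt u)`. -/
def vElt (B : LeftBrace A) (p : ℕ) (u : A) : A :=
  ∑ j ∈ Finset.range (p - 2), (p.choose (j+2) / p) • sIter B u (j+1) u

lemma circPow_p_decomp (B : LeftBrace A) {p n : ℕ} (hp : p.Prime) (hpn : n + 1 < p)
    {s : ℕ} (hs : s ≤ n) {u : A} (hu : u ∈ Zs B s) :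
    B.circPow u p = p • u + p • vElt B p u := by
  rw [circPow_eq]
  congr 1
  rw [vElt, Finset.smul_sum]
  rw [← Finset.sum_subset (Finset.range_subset_range.mpr (by omega : p - 2 ≤ p + 1))
    (f := fun j => (p.choose (j+2)) • sIter B u (j+1) u)]
  · apply Finset.sum_congr rfl
    intro j hj
    rw [Finset.mem_range] at hj
    rw [smul_smul, Nat.mul_div_cancel' (Nat.Prime.dvd_choose_self hp (by omega) (by omega))]
  · intro j hjt hjn
    rw [Finset.mem_range] at hjt
    rw [Finset.mem_range, not_lt] at hjn
    rcases Nat.lt_or_ge j (p - 1) with hj | hj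
    · -- j = p - 2 : the iterate dies in the socle series
      have hdie : sIter B u (j+1) u ∈ Zs B (s - (j+1)) := sIter_mem_Zs B u hu (j+1)
      have : s - (j+1) = 0 := by omega
      rw [this] at hdie
      have : sIter B u (j+1) u = 0 := by simpa [Zs] using hdie
      rw [this, smul_zero]
    · -- j ≥ p - 1 : binomial coefficient vanishes
      rw [Nat.choose_eq_zero_of_lt (by omega), zero_smul]

lemma vElt_mem_Zs (B : LeftBrace A) (p : ℕ) {s : ℕ} {u : A} (hu : u ∈ Zs B s) :
    vElt B p u ∈ Zs B (s - 1) := by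
  apply AddSubgroup.sum_mem
  intro j _
  apply AddSubgroup.nsmul_mem
  exact Zs_mono B (by omega) (sIter_mem_Zs B u hu (j+1))

/-- Iterates of star with good left argument applied to filtration elements. -/
lemma GoodIterP (B : LeftBrace A) (p n : ℕ) {k N : ℕ} {u : A} (h : GoodC B p n k N u)
    {k' m' : ℕ} {z : A} (hz : z ∈ Pset B p n k' m') (m : ℕ) :
    sIter B u m z ∈ Pset B p n (m * k + k') (m * (N + 1) + m') := by
  induction m with
  | zero => simpa [sIter] using hz
  | succ m ih =>
    have h2 := GoodP B p n h ih
    have e1 : k + (m * k + k') = (m+1) * k + k' := by ring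
    have e2 : N + 1 + (m * (N+1) + m') = (m+1) * (N+1) + m' := by ring
    rw [e1, e2] at h2
    exact h2

lemma vElt_mem_Pset (B : LeftBrace A) (p n : ℕ) {k N : ℕ} {u : A} (h : GoodC B p n k N u)
    {k' m' : ℕ} (hu : u ∈ Pset B p n k' m') :
    vElt B p u ∈ Pset B p n (k + k') (N + 1 + m') := by
  apply AddSubgroup.sum_mem
  intro j _
  apply AddSubgroup.nsmul_mem
  have := GoodIterP B p n h hu (j+1)
  exact Pset_mono B p n (by nlinarith) (by nlinarith) this

end Stmt6Aux

namespace Stmt6Aux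

variable {A : Type*} [AddCommGroup A]

/-- The correction element `ρ'` with `p•u = u^{∘p} ∘ (p•ρ')`. -/
def rhoElt (B : LeftBrace A) (p : ℕ) (u : A) : A :=
  -(lam B (B.inv (B.circPow u p)) (vElt B p u))

lemma rho_eq (B : LeftBrace A) {p n : ℕ} (hp : p.Prime) (hpn : n + 1 < p)
    {s : ℕ} (hs : s ≤ n) {u : A} (hu : u ∈ Zs B s) :
    lam B (B.inv (B.circPow u p)) (p • u - B.circPow u p) = p • rhoElt B p u := by
  have harg : p • u - B.circPow u p = -(p • vElt B p u) := by
    rw [circPow_p_decomp B hp hpn hs hu]; abel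
  rw [harg, lam_neg, lam_nsmul, rhoElt, smul_neg]

/-- The key decomposition of `star (p•u) c`. -/
lemma star_pmul_decomp (B : LeftBrace A) {p n : ℕ} (hp : p.Prime) (hpn : n + 1 < p)
    {s : ℕ} (hs : s ≤ n) {u : A} (hu : u ∈ Zs B s) (c : A) :
    B.star (p • u) c = lam B (B.circPow u p) (B.star (p • rhoElt B p u) c)
      + ∑ m ∈ Finset.range p, (p.choose (m+1)) • sIter B u (m+1) c := by
  have hd := star_decomp B (p • u) (B.circPow u p) c
  rw [rho_eq B hp hpn hs hu] at hd
  have hbc : B.star (B.circPow u p) c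
      = ∑ m ∈ Finset.range p, (p.choose (m+1)) • sIter B u (m+1) c := by
    rw [star_eq, lam_circPow]
    rw [Finset.sum_range_succ' (fun m => (p.choose m) • sIter B u m c) p]
    simp [sIter]
  rw [hbc] at hd
  exact hd

/-- G2a : `p•u` is (1,1)-good, for every `u`. -/
lemma G2a (B : LeftBrace A) {p n : ℕ} (hp : p.Prime) (hpn : n + 1 < p) :
    ∀ s, s ≤ n → ∀ u ∈ Zs B s, GoodC B p n 1 1 (p • u) := by
  intro s
  induction s with
  | zero =>
    intro _ u hu
    have : u = 0 := by simpa [Zs] using hu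
    subst this
    rw [smul_zero]
    exact GoodC_zero B p n 1 1
  | succ s ih =>
    intro hsn u hu
    intro t ht c hc
    rw [star_pmul_decomp B hp hpn hsn hu c]
    apply AddSubgroup.add_mem
    · -- the rho term
      apply Pset_lam
      have hrho : rhoElt B p u ∈ Zs B s := by
        have h1 : vElt B p u ∈ Zs B s := by
          have := vElt_mem_Zs B p hu
          simpa using this
        exact (Zs B s).neg_mem (lam_mem_Zs B h1 _)
      exact ih (by omega) (rhoElt B p u) hrho t ht c hc
    · -- the binomial sum
      apply AddSubgroup.sum_mem
      intro m hm
      rw [Finset.mem_range] at hm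
      rcases Nat.lt_or_ge (m+1) p with hmp | hmp
      · -- coefficient divisible by p
        obtain ⟨d, hd⟩ := Nat.Prime.dvd_choose_self hp (by omega : m + 1 ≠ 0) hmp
        rcases Nat.eq_zero_or_pos t with ht0 | ht1
        · -- t = 0 : c = 0
          subst ht0
          have : c = 0 := by simpa [Zs] using hc
          subst this
          have : sIter B u (m+1) (0 : A) = 0 := by
            induction (m+1) with
            | zero => rfl
            | succ k ihk => rw [show sIter B u (k+1) (0:A) = B.star u (sIter B u k 0) from rfl,
                ihk, star_zero_right]
          rw [this, smul_zero]
          exact (Pset B p n 1 (1 + 1 + (n - 0))).zero_mem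
        · have hsi : sIter B u (m+1) c ∈ Zs B (t - (m+1)) := sIter_mem_Zs B u hc (m+1)
          have hmem : p ^ 1 • (d • sIter B u (m+1) c) ∈ Pset B p n 1 (1 + 1 + (n - t)) := by
            apply mem_Pset_of B p n (t := t - (m+1)) (by omega)
              ((Zs B (t - (m+1))).nsmul_mem hsi d) (le_refl 1) (by omega)
          rw [pow_one] at hmem
          rw [hd, ← smul_smul]
          exact hmem
      · -- m + 1 ≥ p : the iterate dies
        have hsi : sIter B u (m+1) c ∈ Zs B (t - (m+1)) := sIter_mem_Zs B u hc (m+1)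
        have h0 : t - (m+1) = 0 := by omega
        rw [h0] at hsi
        have : sIter B u (m+1) c = 0 := by simpa [Zs] using hsi
        rw [this, smul_zero]
        exact (Pset B p n 1 (1 + 1 + (n - t))).zero_mem

end Stmt6Aux

namespace Stmt6Aux

variable {A : Type*} [AddCommGroup A] [Fintype A]

/-- The master generator lemma: `p^(i+1+j) • y` is `(i+1,i+1)`-good. -/
lemma GEN (B : LeftBrace A) {p n : ℕ} (hp : p.Prime) (hpn : n + 1 < p)
    (hZtop : Zs B n = ⊤) (hcard : Fintype.card A = p ^ n) :
    ∀ i j (y : A), GoodC B p n (i+1) (i+1) (p ^ ((i+1)+j) • y) := by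
  intro i
  induction i with
  | zero =>
    intro j y
    have hform : p ^ (1+j) • y = p • (p ^ j • y) := by
      rw [smul_smul, ← pow_succ', add_comm 1 j]
    rw [hform]
    exact G2a B hp hpn n (le_refl n) (p ^ j • y) (by rw [hZtop]; trivial)
  | succ i ihQ =>
    -- inner downward induction on j
    have inner : ∀ d j (y : A), n ≤ j + d →
        GoodC B p n (i+2) (i+2) (p ^ ((i+2)+j) • y) := by
      intro d
      induction d with
      | zero =>
        intro j y hj
        have h0 : p ^ ((i+2)+j) • y = 0 := nsmul_big_zero p n hcard (by omega) y
        rw [h0]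
        exact GoodC_zero B p n _ _
      | succ d ihd =>
        intro j y hjd
        set K := i + 1 with hK
        set u' := p ^ (K + j) • y with hu'
        have hform : p ^ ((i+2)+j) • y = p • u' := by
          rw [hu', smul_smul, ← pow_succ',
            show (i+2)+j = (K+j)+1 by omega]
        rw [hform]
        -- goodness of u' from the outer induction hypothesis
        have hgood : GoodC B p n K K u' := ihQ j y
        -- P-membership of u'
        have hyZ : y ∈ Zs B n := by rw [hZtop]; trivial
        have humem : u' ∈ Pset B p n (K + j) (K + j) :=
          mem_Pset_of B p n (le_refl n) hyZ (le_refl (K+j)) (by omega)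
        -- u' ∈ Zs n (top)
        have hu'Z : u' ∈ Zs B n := by rw [hZtop]; trivial
        intro t ht c hc
        rw [star_pmul_decomp B hp hpn (le_refl n) hu'Z c]
        apply AddSubgroup.add_mem
        · -- rho term
          apply Pset_lam
          -- control rhoElt
          have hv : vElt B p u' ∈ Pset B p n (K + (K+j)) (K + 1 + (K+j)) :=
            vElt_mem_Pset B p n hgood humem
          have hrho : rhoElt B p u' ∈ Pset B p n (K + (K+j)) (K + 1 + (K+j)) := by
            rw [rhoElt]
            exact (Pset B p n _ _).neg_mem (Pset_lam B p n _ hv)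
          have hpro : p • rhoElt B p u' ∈ Pset B p n (K + (K+j) + 1) (K + 1 + (K+j) + 1) :=
            Pset_smul_p B p n hrho
          obtain ⟨y'', hy''⟩ := Pset_dvd B p n hpro
          have hform2 : p • rhoElt B p u' = p ^ ((i+2) + (i + j + 1)) • y'' := by
            rw [hy'', show (i+2) + (i + j + 1) = K + (K+j) + 1 by rw [hK]; omega]
          have hrec := ihd (i + j + 1) y'' (by omega)
          rw [← hform2] at hrec
          exact hrec t ht c hc
        · -- binomial sum term
          apply AddSubgroup.sum_mem
          intro m hm
          rw [Finset.mem_range] at hm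
          have hsi : sIter B u' (m+1) c ∈ Pset B p n ((m+1) * K) ((m+1) * (K+1) + (n - t)) :=
            GoodIter B p n hgood ht hc (m+1)
          rcases Nat.lt_or_ge (m+1) p with hmp | hmp
          · obtain ⟨e, he⟩ := Nat.Prime.dvd_choose_self hp (by omega : m + 1 ≠ 0) hmp
            rw [he, ← smul_smul]
            have h1 : e • sIter B u' (m+1) c ∈ Pset B p n ((m+1)*K) ((m+1)*(K+1) + (n-t)) :=
              (Pset B p n _ _).nsmul_mem hsi e
            have h2 := Pset_smul_p B p n h1
            refine Pset_mono B p n ?_ ?_ h2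
            · nlinarith
            · nlinarith
          · -- m + 1 = p : iterate dies by divisibility
            have hdead : sIter B u' (m+1) c = 0 := by
              apply Pset_bot B p n hcard (k := (m+1) * K) ?_ hsi
              nlinarith
            rw [hdead, smul_zero]
            exact (Pset B p n _ _).zero_mem
    intro j y
    exact inner n j y (by omega)

end Stmt6Aux

namespace Stmt6Aux

variable {A : Type*} [AddCommGroup A]

/-- The circle group of a left brace. -/
def CircGrp {A : Type*} [AddCommGroup A] (B : LeftBrace A) := A

instance circGroup (B : LeftBrace A) : Group (CircGrp B) where
  mul x y := B.circ x y
  mul_assoc := B.circ_assoc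
  one := (0 : A)
  one_mul := B.zero_circ
  mul_one := B.circ_zero
  inv x := B.inv x
  inv_mul_cancel := B.inv_circ

instance circFintype (B : LeftBrace A) [Fintype A] : Fintype (CircGrp B) :=
  inferInstanceAs (Fintype A)

lemma key_step (B : LeftBrace A) [Fintype A] {p n : ℕ} (hp : p.Prime)
    (hcard : Fintype.card A = p ^ n) {j : ℕ} (hne : Zs B j ≠ ⊤) :
    ∃ m : A, m ∈ Zs B (j+1) ∧ m ∉ Zs B j := by
  classical
  set N := Zs B j with hN
  let Q := A ⧸ N
  have hmapmem : ∀ g : A, N ≤ N.comap (lamHom B g) := by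
    intro g m hm
    exact lam_mem_Zs B hm g
  letI : MulAction (CircGrp B) Q :=
    { smul := fun g q => QuotientAddGroup.map N N (lamHom B (g : A)) (hmapmem g) q
      one_smul := fun q => by
        induction q using QuotientAddGroup.induction_on with
        | H m =>
          show QuotientAddGroup.map N N (lamHom B ((1 : CircGrp B) : A)) _ _ = _
          rw [QuotientAddGroup.map_mk]
          congr 1
          exact lam_zero_left B m
      mul_smul := fun g h q => by
        induction q using QuotientAddGroup.induction_on with
        | H m =>
          show QuotientAddGroup.map N N (lamHom B (B.circ g h)) _ _
            = QuotientAddGroup.map N N (lamHom B (g : A)) _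
              (QuotientAddGroup.map N N (lamHom B (h : A)) _ _)
          rw [QuotientAddGroup.map_mk, QuotientAddGroup.map_mk, QuotientAddGroup.map_mk]
          congr 1
          exact lam_circ B g h m }
  haveI : Fact p.Prime := ⟨hp⟩
  have hPG : IsPGroup p (CircGrp B) := by
    apply IsPGroup.of_card (n := n)
    rw [Nat.card_eq_fintype_card]
    exact hcard
  have hmod := hPG.card_modEq_card_fixedPoints Q
  -- cardinality of Q is a positive power of p
  have hcards : Nat.card A = Nat.card Q * Nat.card N :=
    AddSubgroup.card_eq_card_quotient_mul_card_addSubgroup N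
  have hQdvd : Nat.card Q ∣ p ^ n := by
    refine Dvd.intro (Nat.card N) ?_
    rw [← hcard, ← Nat.card_eq_fintype_card, hcards]
  have hQne : Nat.card Q ≠ 1 := by
    intro h1
    apply hne
    apply AddSubgroup.eq_top_of_card_eq
    have : Nat.card A = Nat.card N := by rw [hcards, h1, one_mul]
    rw [← this, Nat.card_eq_fintype_card]
  have hpQ : p ∣ Nat.card Q := by
    obtain ⟨k, hk, hQ⟩ := (Nat.dvd_prime_pow hp).mp hQdvd
    rcases Nat.eq_zero_or_pos k with h0 | h1
    · exfalso; apply hQne; rw [hQ, h0, pow_zero]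
    · rw [hQ]
      exact dvd_pow_self p (by omega)
  -- zero is a fixed point
  have h0fix : (0 : Q) ∈ MulAction.fixedPoints (CircGrp B) Q := by
    intro g
    show QuotientAddGroup.map N N (lamHom B (g : A)) (hmapmem g) 0 = 0
    exact map_zero _
  have hFPdvd : p ∣ Nat.card (MulAction.fixedPoints (CircGrp B) Q) :=
    (Nat.modEq_zero_iff_dvd).mp (hmod.symm.trans (Nat.modEq_zero_iff_dvd.mpr hpQ))
  have hFPpos : 0 < Nat.card (MulAction.fixedPoints (CircGrp B) Q) := by
    rw [Nat.card_pos_iff]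
    exact ⟨⟨⟨0, h0fix⟩⟩, Set.toFinite _⟩
  have hFPtwo : 1 < Nat.card (MulAction.fixedPoints (CircGrp B) Q) := by
    have hple := Nat.le_of_dvd hFPpos hFPdvd
    have := hp.two_le
    omega
  haveI : Finite ((MulAction.fixedPoints (CircGrp B) Q : Set Q)) := Set.toFinite _
  have hnontriv : Nontrivial (MulAction.fixedPoints (CircGrp B) Q : Set Q) := by
    rw [← Finite.one_lt_card_iff_nontrivial]
    exact hFPtwo
  obtain ⟨q, hqne⟩ := exists_ne (⟨(0 : Q), h0fix⟩ :
    (MulAction.fixedPoints (CircGrp B) Q : Set Q))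
  have hq1ne : (q : Q) ≠ 0 := by
    intro h
    apply hqne
    exact Subtype.ext h
  obtain ⟨m, hm⟩ := QuotientAddGroup.mk_surjective (q : Q)
  refine ⟨m, ?_, ?_⟩
  · intro x
    have hfix := q.2 (x : CircGrp B)
    rw [← hm] at hfix
    have : QuotientAddGroup.mk (lam B x m) = (QuotientAddGroup.mk m : Q) := hfix
    have hsub : lam B x m - m ∈ N := by
      rwa [QuotientAddGroup.eq_iff_sub_mem] at this
    rwa [← star_eq] at hsub
  · intro hmem
    apply hq1ne
    rw [← hm]
    rwa [QuotientAddGroup.eq_zero_iff]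

end Stmt6Aux

namespace Stmt6Aux

variable {A : Type*} [AddCommGroup A]

lemma Ztop (B : LeftBrace A) [Fintype A] {p n : ℕ} (hp : p.Prime)
    (hcard : Fintype.card A = p ^ n) : Zs B n = ⊤ := by
  have cardA : Nat.card A = p ^ n := by rw [Nat.card_eq_fintype_card]; exact hcard
  have hsubdvd : ∀ j, Nat.card (Zs B j) ∣ p ^ n := by
    intro j
    rw [← cardA]
    exact AddSubgroup.card_addSubgroup_dvd_card _
  have grow : ∀ j, Zs B j = ⊤ ∨ p ^ j ∣ Nat.card (Zs B j) := by
    intro j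
    induction j with
    | zero =>
      right
      simp [Zs]
    | succ j ih =>
      by_cases hne : Zs B j = ⊤
      · left
        rw [eq_top_iff, ← hne]
        exact Zs_mono_succ B j
      · have hdvd : p ^ j ∣ Nat.card (Zs B j) := by
          rcases ih with h | h
          · exact absurd h hne
          · exact h
        right
        obtain ⟨m, hm1, hm2⟩ := key_step B hp hcard hne
        have hle := Zs_mono_succ B j
        have hdvd2 : Nat.card (Zs B j) ∣ Nat.card (Zs B (j+1)) :=
          AddSubgroup.card_dvd_of_le hle
        have hne2 : Zs B j ≠ Zs B (j+1) := fun h => hm2 (h ▸ hm1)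
        have hpos : 0 < Nat.card (Zs B (j+1)) := Nat.card_pos
        have hlt : Nat.card (Zs B j) < Nat.card (Zs B (j+1)) := by
          refine lt_of_le_of_ne (Nat.le_of_dvd hpos hdvd2) (fun h => hne2 ?_)
          exact AddSubgroup.eq_of_le_of_card_ge hle (le_of_eq h.symm)
        obtain ⟨a, ha, hA⟩ := (Nat.dvd_prime_pow hp).mp (hsubdvd (j+1))
        obtain ⟨b, hb, hB⟩ := (Nat.dvd_prime_pow hp).mp (hsubdvd j)
        have hjb : j ≤ b := by
          have : p ^ j ∣ p ^ b := by rw [← hB]; exact hdvd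
          exact (Nat.pow_dvd_pow_iff_le_right hp.one_lt).mp this
        have hba : b < a := by
          have : p ^ b < p ^ a := by rw [← hA, ← hB]; exact hlt
          exact (Nat.pow_lt_pow_iff_right hp.one_lt).mp this
        rw [hA]
        exact pow_dvd_pow p (by omega)
  rcases grow n with h | h
  · exact h
  · apply AddSubgroup.eq_top_of_card_eq
    have h1 : Nat.card (Zs B n) ≤ p ^ n := Nat.le_of_dvd (pow_pos hp.pos n) (hsubdvd n)
    have h2 : p ^ n ≤ Nat.card (Zs B n) := Nat.le_of_dvd Nat.card_pos h
    rw [cardA]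
    omega

end Stmt6Aux

/-- Let A be a brace of cardinality p^n, p prime, p > n + 1. Then pA is a subbrace of A
(closed under subtraction, ∘ and inverses) which is strongly nilpotent of nilpotency
index at most p - 1, i.e. every product of p - 1 elements of pA vanishes. -/
theorem stmt6 {A : Type*} [AddCommGroup A] [Fintype A] (B : LeftBrace A) (p n : ℕ)
    (hp : p.Prime) (hpn : n + 1 < p) (hcard : Fintype.card A = p ^ n) :
    (∀ x ∈ Set.range (fun a : A => p • a), ∀ y ∈ Set.range (fun a : A => p • a),
        x - y ∈ Set.range (fun a : A => p • a)) ∧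
    (∀ x ∈ Set.range (fun a : A => p • a), ∀ y ∈ Set.range (fun a : A => p • a),
        B.circ x y ∈ Set.range (fun a : A => p • a)) ∧
    (∀ x ∈ Set.range (fun a : A => p • a), B.inv x ∈ Set.range (fun a : A => p • a)) ∧
    (∀ x : A, StarProdIn B (Set.range (fun a : A => p • a)) (p - 1) x → x = 0) := by
  open Stmt6Aux in
  refine ⟨?_, ?_, ?_, ?_⟩
  · rintro x ⟨a, rfl⟩ y ⟨b, rfl⟩
    exact ⟨a - b, by simp [smul_sub]⟩
  · rintro x ⟨a, rfl⟩ y ⟨b, rfl⟩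
    refine ⟨a + lam B (p • a) b, ?_⟩
    simp only
    rw [circ_eq, lam_nsmul, smul_add]
  · rintro x ⟨a, rfl⟩
    refine ⟨-(lam B (B.inv (p • a)) a), ?_⟩
    have h := B.inv_circ (p • a)
    rw [circ_eq, lam_nsmul] at h
    simp only [smul_neg]
    exact neg_eq_of_add_eq_zero_left h
  · intro x hx
    have hZtop := Ztop B hp hcard
    have key : ∀ k (z : A), StarProdIn B (Set.range (fun a : A => p • a)) k z →
        1 ≤ k ∧ ∃ y, z = p ^ k • y := by
      intro k z h
      induction h with
      | base hx0 =>
        obtain ⟨a, ha⟩ := hx0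
        exact ⟨le_refl 1, a, by rw [← ha, pow_one]⟩
      | @mul i j z1 z2 h1 h2 ih1 ih2 =>
        obtain ⟨hi1, y1, hy1⟩ := ih1
        obtain ⟨hj1, y2, hy2⟩ := ih2
        refine ⟨by omega, ?_⟩
        have hgood : GoodC B p n i i z1 := by
          have h := GEN B hp hpn hZtop hcard (i - 1) 0 y1
          rw [show (i - 1) + 1 = i by omega] at h
          rw [hy1]
          exact h
        have hy2Z : y2 ∈ Zs B n := by rw [hZtop]; trivial
        have hst : B.star z1 y2 ∈ Pset B p n i (i + 1 + (n - n)) :=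
          hgood n (le_refl n) y2 hy2Z
        obtain ⟨w, hw⟩ := Pset_dvd B p n hst
        refine ⟨w, ?_⟩
        rw [hy2, star_nsmul_right, hw, smul_smul, ← pow_add, add_comm j i]
    obtain ⟨-, y, hy⟩ := key (p - 1) x hx
    rw [hy]
    exact nsmul_big_zero p n hcard (by omega) y
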